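/- Let A be a square integer matrix of size r, and let τ = [[0, I_s],[−I_s, 0]] be the standard symplectic 2s×2s matrix. Then the Kronecker product A ⊗ τ is integrally congruent (after simultaneous row/column permutation) to [[0, ⊞ˢA],[−⊞ˢA, 0]] and hence is null-cobordant. -/
import Mathlib


open Matrix

/-- A square integer matrix is *null-cobordant* (Levine) if, after identifying
its index type with `Fin r ⊕ Fin r`, it is integrally congruent (`N ↦ P * N * Pᵀ`
with `P` invertible over `ℤ`) to a matrix whose upper-left `r × r` block is zero. -/
def NullCobordant {n : Type*} [Fintype n] [DecidableEq n] (N : Matrix n n ℤ) : Prop :=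
  ∃ (r : ℕ) (e : n ≃ Fin r ⊕ Fin r) (P : Matrix n n ℤ), IsUnit P.det ∧
    ∀ i j : Fin r, (P * N * Pᵀ) (e.symm (Sum.inl i)) (e.symm (Sum.inl j)) = 0
open scoped Kronecker

theorem stmt4 (r s : ℕ) (A : Matrix (Fin r) (Fin r) ℤ)
    (τ : Matrix (Fin s ⊕ Fin s) (Fin s ⊕ Fin s) ℤ)
    (hτ : τ = Matrix.fromBlocks 0 1 (-1) 0)
    (D : Matrix (Fin r × Fin s) (Fin r × Fin s) ℤ)
    (hD : D = Matrix.blockDiagonal (fun _ : Fin s => A)) :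
    Matrix.reindex (Equiv.prodSumDistrib (Fin r) (Fin s) (Fin s))
        (Equiv.prodSumDistrib (Fin r) (Fin s) (Fin s)) (A ⊗ₖ τ) =
      Matrix.fromBlocks 0 D (-D) 0 ∧
    NullCobordant (A ⊗ₖ τ) := by
  constructor
  · subst hτ hD
    ext i j
    rcases i with (⟨⟨a, b⟩⟩ | ⟨⟨a, b⟩⟩) <;> rcases j with (⟨⟨c, d⟩⟩ | ⟨⟨c, d⟩⟩) <;>
      simp [Matrix.kroneckerMap_apply, Matrix.blockDiagonal_apply, Matrix.one_apply,
        mul_comm, eq_comm]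
  · refine ⟨r * s,
      (Equiv.prodSumDistrib (Fin r) (Fin s) (Fin s)).trans
        (Equiv.sumCongr finProdFinEquiv finProdFinEquiv), 1, by simp, ?_⟩
    subst hτ
    intro i j
    simp [Matrix.kroneckerMap_apply, Matrix.fromBlocks]
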